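/- The linear map Ψ on ℂ^{n×n} defined by Ψ(E_{jj}) = ∑_l A_{lj} E_{ll} with A = (1/2)(I + C) (C the cyclic shift), Ψ(E_{jk}) = (i/(2^j 3^k)) E_{jk} for j < k, and Ψ(E_{jk}) = (-i/(2^k 3^j)) E_{jk} for j > k, is trace-preserving and unital, and its n²×n² representation matrix has n² distinct eigenvalues. -/

import Mathlib

open Complex

section Aux
open Polynomial
open Fin.NatCast

private lemma eq_aux (a b : ℕ) : I / ((2:ℂ)^a * 3^b) = ((((2:ℝ)^a*3^b))⁻¹ : ℝ) * I := by
  have : ((2:ℂ)^a * 3^b) = (((2:ℝ)^a*3^b : ℝ) : ℂ) := by push_cast; ring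
  rw [this, div_eq_mul_inv, ← Complex.ofReal_inv, mul_comm]

private lemma two_three_inj {a b c d : ℕ} (h : 2^a * 3^b = 2^c * 3^d) : a = c ∧ b = d := by
  have h2 : (2^a * 3^b : ℕ).factorization 2 = (2^c * 3^d : ℕ).factorization 2 := by rw [h]
  have h3 : (2^a * 3^b : ℕ).factorization 3 = (2^c * 3^d : ℕ).factorization 3 := by rw [h]
  rw [Nat.factorization_mul (by positivity) (by positivity)] at h2 h3
  simp [Nat.Prime.factorization_pow, Nat.prime_two, Nat.prime_three] at h2 h3
  exact ⟨h2, h3⟩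

private lemma rr_inj {a b c d : ℕ} (h : (((2:ℝ)^a*3^b))⁻¹ = (((2:ℝ)^c*3^d))⁻¹) :
    a = c ∧ b = d := by
  have h' : ((2:ℝ)^a*3^b) = ((2:ℝ)^c*3^d) := by
    have h1 : ((2:ℝ)^a*3^b) ≠ 0 := by positivity
    have h2 : ((2:ℝ)^c*3^d) ≠ 0 := by positivity
    field_simp at h
    exact h.symm
  have hcast : ((2^a*3^b : ℕ) : ℝ) = ((2^c*3^d : ℕ) : ℝ) := by push_cast; exact h'
  exact two_three_inj (Nat.cast_injective hcast)

private noncomputable def lamF {n : ℕ} (p : Fin n × Fin n) : ℂ :=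
  if (p.1 : ℕ) < (p.2 : ℕ) then I / (2 ^ ((p.1:ℕ)+1) * 3 ^ ((p.2:ℕ)+1))
  else -(I / (2 ^ ((p.2:ℕ)+1) * 3 ^ ((p.1:ℕ)+1)))

private lemma lamF_re {n : ℕ} (p : Fin n × Fin n) : (lamF p).re = 0 := by
  unfold lamF
  split
  · rw [eq_aux, Complex.re_ofReal_mul, Complex.I_re, mul_zero]
  · rw [Complex.neg_re, eq_aux, Complex.re_ofReal_mul, Complex.I_re, mul_zero, neg_zero]

private lemma lamF_im {n : ℕ} (p : Fin n × Fin n) :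
    (lamF p).im = if (p.1 : ℕ) < (p.2 : ℕ) then (((2:ℝ)^((p.1:ℕ)+1)*3^((p.2:ℕ)+1)))⁻¹
      else -(((2:ℝ)^((p.2:ℕ)+1)*3^((p.1:ℕ)+1)))⁻¹ := by
  unfold lamF
  split
  · rw [eq_aux, Complex.im_ofReal_mul, Complex.I_im, mul_one]
  · rw [Complex.neg_im, eq_aux, Complex.im_ofReal_mul, Complex.I_im,
      mul_one]

private lemma lamF_im_ne {n : ℕ} (p : Fin n × Fin n) : (lamF p).im ≠ 0 := by
  rw [lamF_im]
  split
  · positivity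
  · simp only [neg_ne_zero]
    positivity

private lemma lamF_inj {n : ℕ} (p q : Fin n × Fin n) (hp : p.1 ≠ p.2) (hq : q.1 ≠ q.2)
    (h : lamF p = lamF q) : p = q := by
  have him := congrArg Complex.im h
  rw [lamF_im, lamF_im] at him
  have hppos : ∀ a b : ℕ, (0:ℝ) < (((2:ℝ)^a*3^b))⁻¹ := fun a b => by positivity
  rcases lt_or_gt_of_ne (fun hv : (p.1:ℕ) = (p.2:ℕ) => hp (Fin.ext hv)) with h1 | h1 <;>
    rcases lt_or_gt_of_ne (fun hv : (q.1:ℕ) = (q.2:ℕ) => hq (Fin.ext hv)) with h2 | h2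
  · rw [if_pos h1, if_pos h2] at him
    obtain ⟨ha, hb⟩ := rr_inj him
    exact Prod.ext (Fin.ext (by omega)) (Fin.ext (by omega))
  · rw [if_pos h1, if_neg (by omega)] at him
    have ha := hppos ((p.1:ℕ)+1) ((p.2:ℕ)+1)
    have hb := hppos ((q.2:ℕ)+1) ((q.1:ℕ)+1)
    exfalso; linarith
  · rw [if_neg (by omega), if_pos h2] at him
    have ha := hppos ((p.2:ℕ)+1) ((p.1:ℕ)+1)
    have hb := hppos ((q.1:ℕ)+1) ((q.2:ℕ)+1)
    exfalso; linarith
  · rw [if_neg (by omega), if_neg (by omega)] at him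
    obtain ⟨ha, hb⟩ := rr_inj (neg_injective him)
    exact Prod.ext (Fin.ext (by omega)) (Fin.ext (by omega))

private lemma lamF_ne_root {n : ℕ} (hn : 0 < n) (z : ℂ) (hz : z ∈ Polynomial.nthRootsFinset n (1:ℂ))
    (p : Fin n × Fin n) : (1+z)/2 ≠ lamF p := by
  intro h
  have hre := congrArg Complex.re h
  have him := congrArg Complex.im h
  rw [lamF_re] at hre
  have hzre : z.re = -1 := by
    simp [Complex.div_re] at hre
    nlinarith [hre]
  have hzn : z ^ n = 1 := (Polynomial.mem_nthRootsFinset hn 1).mp hz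
  have habs : ‖z‖ = 1 := by
    have h1 : ‖z‖ ^ n = 1 := by
      rw [← norm_pow, hzn, norm_one]
    have h0 : (0:ℝ) ≤ ‖z‖ := norm_nonneg z
    by_contra hne
    rcases lt_or_gt_of_ne hne with hlt | hgt
    · have := pow_lt_one₀ h0 hlt hn.ne'
      linarith
    · have := one_lt_pow₀ hgt hn.ne'
      linarith
  have hnsq : z.re ^ 2 + z.im ^ 2 = 1 := by
    have := Complex.sq_norm z
    rw [habs] at this
    simp [Complex.normSq_apply] at this
    nlinarith [this]
  have hzim : z.im = 0 := by nlinarith [hnsq, hzre]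
  have : ((1+z)/2).im = 0 := by simp [Complex.div_im, hzim]
  rw [h] at this
  exact lamF_im_ne p this

private noncomputable def shiftM (n : ℕ) [NeZero n] : Matrix (Fin n) (Fin n) ℂ :=
  Matrix.of fun j k => if k = j + 1 then 1 else 0

private lemma shiftM_pow (n : ℕ) [NeZero n] (m : ℕ) :
    (shiftM n) ^ m = Matrix.of fun j k => if k = j + (m : Fin n) then 1 else 0 := by
  induction m with
  | zero => ext j k; simp [Matrix.one_apply, eq_comm]
  | succ m ih =>
    ext j k
    rw [pow_succ, ih]
    simp only [Matrix.mul_apply, shiftM, Matrix.of_apply, ite_mul, one_mul, zero_mul]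
    rw [Finset.sum_ite_eq' (Finset.univ) (j + (m : Fin n)) (fun l => if k = l + 1 then (1:ℂ) else 0)]
    simp [Nat.cast_add, add_assoc]

private lemma shiftM_pow_self (n : ℕ) [NeZero n] : (shiftM n) ^ n = 1 := by
  rw [shiftM_pow]
  ext j k
  simp [Matrix.one_apply, Fin.natCast_self, eq_comm]

private lemma shiftM_small_ann (n : ℕ) [NeZero n] (p : ℂ[X]) (hdeg : p.natDegree < n)
    (h : Polynomial.aeval (shiftM n) p = 0) : p = 0 := by
  ext i
  rcases lt_or_ge i n with hi | hi
  · have h0 := congrFun (congrFun (congrArg (fun M : Matrix (Fin n) (Fin n) ℂ => (M : Fin n → Fin n → ℂ))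
      ((Polynomial.aeval_eq_sum_range' hdeg (shiftM n)).symm.trans h)) 0) ⟨i, hi⟩
    rw [Matrix.sum_apply] at h0
    rw [show ((0:Matrix (Fin n) (Fin n) ℂ) 0 ⟨i, hi⟩) = 0 from rfl] at h0
    have : ∀ m ∈ Finset.range n, (p.coeff m • (shiftM n) ^ m) 0 ⟨i, hi⟩
        = if m = i then p.coeff i else 0 := by
      intro m hm
      rw [shiftM_pow]
      simp only [Matrix.smul_apply, Matrix.of_apply, smul_eq_mul]
      have : ((⟨i, hi⟩ : Fin n) = 0 + (m : Fin n)) ↔ m = i := by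
        rw [zero_add, Fin.ext_iff]
        simp [Nat.mod_eq_of_lt (Finset.mem_range.mp hm)]
        exact eq_comm
      rw [if_congr this rfl rfl]
      split <;> simp_all
    rw [Finset.sum_congr rfl this, Finset.sum_ite_eq' (Finset.range n) i (fun _ => p.coeff i)] at h0
    rw [if_pos (Finset.mem_range.mpr hi)] at h0
    simpa using h0
  · simp [Polynomial.coeff_eq_zero_of_natDegree_lt (lt_of_lt_of_le hdeg hi)]

section ShiftCharpoly
variable (n : ℕ) [NeZero n] (S : Matrix (Fin n) (Fin n) ℂ)
  (hpow : S ^ n = 1) (hann : ∀ p : ℂ[X], p.natDegree < n → Polynomial.aeval S p = 0 → p = 0)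

include hpow hann in
private lemma charpoly_of_shift : S.charpoly = X ^ n - 1 := by
  have hn : 0 < n := Nat.pos_of_ne_zero (NeZero.ne n)
  have hmonic : (X ^ n - 1 : ℂ[X]).Monic := by
    simpa using Polynomial.monic_X_pow_sub_C (1:ℂ) hn.ne'
  have hdegXn : (X ^ n - 1 : ℂ[X]).natDegree = n := by
    simpa using Polynomial.natDegree_X_pow_sub_C (n := n) (r := (1:ℂ))
  have hint : IsIntegral ℂ S := ⟨S.charpoly, S.charpoly_monic, Matrix.aeval_self_charpoly S⟩
  have hannX : Polynomial.aeval S (X ^ n - 1 : ℂ[X]) = 0 := by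
    simp [hpow]
  have hdvd : minpoly ℂ S ∣ X ^ n - 1 := minpoly.dvd ℂ S hannX
  have hne : (X ^ n - 1 : ℂ[X]) ≠ 0 := hmonic.ne_zero
  have hdegle : (minpoly ℂ S).natDegree ≤ n := by
    simpa [hdegXn] using Polynomial.natDegree_le_of_dvd hdvd hne
  have hdegge : ¬ (minpoly ℂ S).natDegree < n := fun hlt =>
    minpoly.ne_zero hint (hann _ hlt (minpoly.aeval ℂ S))
  have hmin : X ^ n - 1 = minpoly ℂ S :=
    Polynomial.eq_of_monic_of_dvd_of_natDegree_le (minpoly.monic hint) hmonic hdvd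
      (by omega)
  have hdvd2 : minpoly ℂ S ∣ S.charpoly := minpoly.dvd ℂ S (Matrix.aeval_self_charpoly S)
  rw [← hmin] at hdvd2
  exact Polynomial.eq_of_monic_of_dvd_of_natDegree_le hmonic S.charpoly_monic hdvd2
    (by simp [hdegXn])
end ShiftCharpoly

private lemma charpoly_A (n : ℕ) [NeZero n] (S A : Matrix (Fin n) (Fin n) ℂ)
    (hS : S.charpoly = X ^ n - 1) (hA : A = (2⁻¹ : ℂ) • (1 + S)) :
    A.charpoly = ∏ z ∈ Polynomial.nthRootsFinset n (1:ℂ), (X - C ((1+z)/2)) := by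
  have hn : 0 < n := Nat.pos_of_ne_zero (NeZero.ne n)
  have h2C : (2:ℂ[X]) = C 2 := (map_ofNat C 2).symm
  set φ : ℂ[X] →+* ℂ[X] := (Polynomial.aeval (2*X - 1 : ℂ[X])).toRingHom with hφ
  have hφX : φ X = 2*X - 1 := by simp [hφ]
  have hφC : ∀ c : ℂ, φ (C c) = C c := fun c => by simp [hφ]
  have hmap : (Matrix.charmatrix S).map φ = (2:ℂ[X]) • Matrix.charmatrix A := by
    ext i j
    by_cases h : i = j
    · subst h
      have hAe : A i i = 2⁻¹ * (1 + S i i) := by simp [hA]; ring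
      simp only [Matrix.map_apply, Matrix.charmatrix_apply_eq, map_sub, hφX, hφC,
        Matrix.smul_apply, smul_eq_mul, hAe]
      rw [h2C, mul_sub, ← map_mul, show (2:ℂ) * (2⁻¹ * (1 + S i i)) = 1 + S i i from by ring,
        map_add, map_one]
      ring
    · have hAe : A i j = 2⁻¹ * S i j := by simp [hA, Matrix.one_apply_ne h]
      simp only [Matrix.map_apply, Matrix.charmatrix_apply_ne _ _ _ h, map_neg, hφC,
        Matrix.smul_apply, smul_eq_mul, hAe]
      rw [h2C, mul_neg, ← map_mul, show (2:ℂ) * (2⁻¹ * S i j) = S i j from by ring]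
  have hdet : φ S.charpoly = (2:ℂ[X])^n * A.charpoly := by
    have h1 : φ S.charpoly = ((Matrix.charmatrix S).map φ).det := by
      rw [Matrix.charpoly, RingHom.map_det φ (Matrix.charmatrix S), RingHom.mapMatrix_apply]
    rw [h1, hmap, Matrix.det_smul]
    simp [Matrix.charpoly]
  have hprim : IsPrimitiveRoot (Complex.exp (2 * Real.pi * I / n)) n :=
    Complex.isPrimitiveRoot_exp n hn.ne'
  have hfact : (X:ℂ[X]) ^ n - 1 = ∏ z ∈ Polynomial.nthRootsFinset n (1:ℂ), (X - C z) :=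
    Polynomial.X_pow_sub_one_eq_prod hn hprim
  have hmain : (2*X-1:ℂ[X])^n - 1 = (2:ℂ[X])^n * A.charpoly := by
    rw [← hdet, hS]
    simp [hφX]
  have hfac : ∀ z : ℂ, (2*X - 1 - C z : ℂ[X]) = 2 * (X - C ((1+z)/2)) := by
    intro z
    rw [h2C, mul_sub, ← map_mul, show (2:ℂ) * ((1+z)/2) = 1 + z from by ring,
      map_add, map_one]
    ring
  have hsplit : (2*X-1:ℂ[X])^n - 1
      = (2:ℂ[X])^n * ∏ z ∈ Polynomial.nthRootsFinset n (1:ℂ), (X - C ((1+z)/2)) := by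
    have h1 := congrArg φ hfact
    simp only [map_sub, map_pow, map_one, hφX, map_prod, hφC] at h1
    rw [h1, Finset.prod_congr rfl (fun z _ => hfac z), Finset.prod_mul_distrib,
      Finset.prod_const, hprim.card_nthRootsFinset]
  have h2n : ((2:ℂ[X])^n) ≠ 0 := pow_ne_zero _ two_ne_zero
  exact mul_left_cancel₀ h2n (hmain ▸ hsplit ▸ rfl)

end Aux

/-- The map `Ψ` sending `E_{jj} ↦ ∑_l A_{lj} E_{ll}` (with `A = (1/2)(I + C)`, `C` the cyclic
shift), `E_{jk} ↦ (i/(2^j 3^k)) E_{jk}` for `j < k` and `E_{jk} ↦ (-i/(2^k 3^j)) E_{jk}` for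
`j > k`, is trace-preserving and unital, and has `n²` distinct eigenvalues (its
characteristic polynomial, of degree `n²`, is squarefree). -/
theorem stmt_19 {n : ℕ} (hn : 0 < n)
    (C : Matrix (Fin n) (Fin n) ℂ)
    (hC : ∀ j k : Fin n, C j k = if (k : ℕ) = ((j : ℕ) + 1) % n then 1 else 0)
    (A : Matrix (Fin n) (Fin n) ℂ) (hA : A = (2⁻¹ : ℂ) • (1 + C))
    (Ψ : Matrix (Fin n) (Fin n) ℂ →ₗ[ℂ] Matrix (Fin n) (Fin n) ℂ)
    (hΨ : ∀ j k : Fin n, Ψ (Matrix.single j k 1) =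
        if j = k then ∑ l : Fin n, A l j • Matrix.single l l (1 : ℂ)
        else if (j : ℕ) < (k : ℕ) then
          (I / (2 ^ ((j : ℕ) + 1) * 3 ^ ((k : ℕ) + 1))) • Matrix.single j k (1 : ℂ)
        else
          (-(I / (2 ^ ((k : ℕ) + 1) * 3 ^ ((j : ℕ) + 1)))) • Matrix.single j k (1 : ℂ)) :
    (∀ ρ : Matrix (Fin n) (Fin n) ℂ, (Ψ ρ).trace = ρ.trace) ∧
    Ψ 1 = 1 ∧
    Squarefree (LinearMap.charpoly Ψ) := by
  haveI : NeZero n := ⟨hn.ne'⟩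
  classical
  -- C is the shift matrix
  have hCs : C = shiftM n := by
    ext j k
    rw [hC j k]
    unfold shiftM
    rw [Matrix.of_apply]
    refine if_congr ?_ rfl rfl
    rw [Fin.ext_iff, Fin.add_def, Fin.val_one']
    simp [Nat.add_mod_mod]
  -- column and row sums of A are 1
  have hsum1 : ∀ j : Fin n, (∑ l : Fin n, (1 : Matrix (Fin n) (Fin n) ℂ) l j) = 1 := by
    intro j
    rw [Finset.sum_congr rfl (fun l _ => Matrix.one_apply (i := l) (j := j))]
    rw [Finset.sum_ite_eq' Finset.univ j (fun _ => (1:ℂ))]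
    simp
  have hsum1' : ∀ l : Fin n, (∑ j : Fin n, (1 : Matrix (Fin n) (Fin n) ℂ) l j) = 1 := by
    intro l
    rw [Finset.sum_congr rfl (fun j _ => Matrix.one_apply (i := l) (j := j))]
    rw [Finset.sum_ite_eq Finset.univ l (fun _ => (1:ℂ))]
    simp
  have hsumC : ∀ j : Fin n, (∑ l : Fin n, C l j) = 1 := by
    intro j
    simp only [hCs, shiftM, Matrix.of_apply]
    rw [show (∑ l : Fin n, (if j = l + 1 then (1:ℂ) else 0))
      = ∑ l : Fin n, (fun m => if j = m then (1:ℂ) else 0) ((Equiv.addRight (1 : Fin n)) l) from rfl]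
    rw [Equiv.sum_comp (Equiv.addRight (1 : Fin n)) (fun m => if j = m then (1:ℂ) else 0)]
    rw [Finset.sum_ite_eq Finset.univ j (fun _ => (1:ℂ))]
    simp
  have hsumC' : ∀ l : Fin n, (∑ j : Fin n, C l j) = 1 := by
    intro l
    simp only [hCs, shiftM, Matrix.of_apply]
    rw [Finset.sum_ite_eq' Finset.univ (l + 1) (fun _ => (1:ℂ))]
    simp
  have hcol : ∀ j : Fin n, (∑ l : Fin n, A l j) = 1 := by
    intro j
    simp only [hA, Matrix.smul_apply, Matrix.add_apply, smul_eq_mul]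
    rw [← Finset.mul_sum, Finset.sum_add_distrib, hsum1 j, hsumC j]
    norm_num
  have hrow : ∀ l : Fin n, (∑ j : Fin n, A l j) = 1 := by
    intro l
    simp only [hA, Matrix.smul_apply, Matrix.add_apply, smul_eq_mul]
    rw [← Finset.mul_sum, Finset.sum_add_distrib, hsum1' l, hsumC' l]
    norm_num
  -- trace of images of basis elements
  have htrE : ∀ j k : Fin n, (Ψ (Matrix.single j k 1)).trace = if j = k then 1 else 0 := by
    intro j k
    rw [hΨ]
    by_cases h : j = k
    · subst h
      rw [if_pos rfl, if_pos rfl, Matrix.trace_sum]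
      rw [Finset.sum_congr rfl (fun l _ => by
        rw [Matrix.trace_smul, Matrix.trace_single_eq_same, smul_eq_mul, mul_one])]
      exact hcol j
    · rw [if_neg h, if_neg h]
      split <;>
        rw [Matrix.trace_smul, Matrix.trace_single_eq_of_ne _ _ _ h, smul_zero]
  -- trace preservation
  have htrace : ∀ ρ : Matrix (Fin n) (Fin n) ℂ, (Ψ ρ).trace = ρ.trace := by
    intro ρ
    conv_lhs => rw [Matrix.matrix_eq_sum_single ρ]
    rw [map_sum, Matrix.trace_sum]
    have hj : ∀ j : Fin n, (Ψ (∑ k : Fin n, Matrix.single j k (ρ j k))).trace = ρ j j := by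
      intro j
      rw [map_sum, Matrix.trace_sum]
      have h2 : ∀ k : Fin n, (Ψ (Matrix.single j k (ρ j k))).trace
          = if k = j then ρ j j else 0 := by
        intro k
        rw [show Matrix.single j k (ρ j k) = ρ j k • Matrix.single j k 1 from by
          rw [Matrix.smul_single, smul_eq_mul, mul_one],
          map_smul, Matrix.trace_smul, htrE j k, smul_eq_mul]
        by_cases h : j = k
        · subst h; simp
        · simp [h, Ne.symm h]
      rw [Finset.sum_congr rfl (fun k _ => h2 k),
        Finset.sum_ite_eq' Finset.univ j (fun _ => ρ j j)]
      simp
    rw [Finset.sum_congr rfl (fun j _ => hj j)]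
    rfl
  -- unitality
  have hone : (1 : Matrix (Fin n) (Fin n) ℂ) = ∑ j : Fin n, Matrix.single j j 1 := by
    ext a b
    rw [Matrix.sum_apply]
    by_cases h : a = b
    · subst h
      rw [Matrix.one_apply_eq]
      rw [Finset.sum_congr rfl (fun j _ => by
        rw [show Matrix.single j j (1:ℂ) a a = if j = a then 1 else 0 from by
          by_cases hj : j = a
          · subst hj; simp [Matrix.single]
          · simp [Matrix.single, hj]])]
      rw [Finset.sum_ite_eq' Finset.univ a (fun _ => (1:ℂ))]
      simp
    · rw [Matrix.one_apply_ne h]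
      rw [Finset.sum_congr rfl (fun j _ => show Matrix.single j j (1:ℂ) a b = 0 from by
        simp [Matrix.single]
        intro h1 h2
        exact absurd (h1 ▸ h2 ▸ rfl : a = b) h)]
      simp
  have hunital : Ψ 1 = 1 := by
    conv_lhs => rw [hone, map_sum]
    rw [Finset.sum_congr rfl (fun j _ => by rw [hΨ j j, if_pos rfl])]
    rw [Finset.sum_comm]
    rw [Finset.sum_congr rfl (fun l _ => by
      rw [← Finset.sum_smul, hrow l, one_smul])]
    exact hone.symm
  refine ⟨htrace, hunital, ?_⟩
  -- the representation matrix of Ψ in the standard basis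
  let b : Module.Basis (Fin n × Fin n) ℂ (Matrix (Fin n) (Fin n) ℂ) := Matrix.stdBasis ℂ (Fin n) (Fin n)
  let MM : Matrix (Fin n × Fin n) (Fin n × Fin n) ℂ := Matrix.of fun p q =>
    if q.1 = q.2 then (if p.1 = p.2 then A p.1 q.1 else 0)
    else (if p = q then lamF q else 0)
  have hMM : ∀ p q : Fin n × Fin n, MM p q
      = if q.1 = q.2 then (if p.1 = p.2 then A p.1 q.1 else 0)
        else (if p = q then lamF q else 0) := fun p q => rfl
  have hlam : ∀ q : Fin n × Fin n,
      lamF q = if (q.1 : ℕ) < (q.2 : ℕ) then I / (2 ^ ((q.1:ℕ)+1) * 3 ^ ((q.2:ℕ)+1))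
        else -(I / (2 ^ ((q.2:ℕ)+1) * 3 ^ ((q.1:ℕ)+1))) := fun q => rfl
  have htoLin : Matrix.toLin b b MM = Ψ := by
    apply b.ext
    intro q
    obtain ⟨j, k⟩ := q
    rw [Matrix.toLin_self]
    have hb : ∀ p : Fin n × Fin n, b p = Matrix.single p.1 p.2 (1:ℂ) := fun p =>
      Matrix.stdBasis_eq_single ℂ p.1 p.2
    rw [hb, hΨ j k]
    by_cases h : j = k
    · subst h
      rw [if_pos rfl]
      rw [Fintype.sum_prod_type]
      have hinner : ∀ a : Fin n,
          (∑ c : Fin n, MM (a, c) (j, j) • b (a, c)) = A a j • Matrix.single a a 1 := by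
        intro a
        have : ∀ c : Fin n, MM (a, c) (j, j) • b (a, c)
            = if a = c then A a j • Matrix.single a a 1 else 0 := by
          intro c
          rw [hMM, if_pos rfl]
          by_cases hac : a = c
          · subst hac; rw [if_pos rfl, if_pos rfl, hb]
          · rw [if_neg hac, if_neg hac, zero_smul]
        rw [Finset.sum_congr rfl (fun c _ => this c),
          Finset.sum_ite_eq Finset.univ a (fun _ => A a j • Matrix.single a a 1)]
        simp
      rw [Finset.sum_congr rfl (fun a _ => hinner a)]
    · rw [if_neg h]
      have : ∀ p : Fin n × Fin n, MM p (j, k) • b p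
          = if p = (j, k) then lamF (j, k) • Matrix.single j k 1 else 0 := by
        intro p
        rw [hMM, if_neg h]
        by_cases hp : p = (j, k)
        · subst hp; rw [if_pos rfl, if_pos rfl, hb]
        · rw [if_neg hp, if_neg hp, zero_smul]
      rw [Finset.sum_congr rfl (fun p _ => this p),
        Finset.sum_ite_eq' Finset.univ ((j, k) : Fin n × Fin n)
          (fun _ => lamF (j, k) • Matrix.single j k 1)]
      rw [if_pos (Finset.mem_univ _), hlam]
      split <;> rfl
  have hcharpoly : LinearMap.charpoly Ψ = MM.charpoly := by
    rw [← htoLin, ← LinearMap.charpoly_toMatrix (Matrix.toLin b b MM) b,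
      LinearMap.toMatrix_toLin]
  -- block decomposition
  let P : Fin n × Fin n → Prop := fun p => p.1 = p.2
  let T := {p : Fin n × Fin n // ¬ P p}
  let d : Fin n ≃ {p : Fin n × Fin n // P p} :=
    { toFun := fun j => ⟨(j, j), rfl⟩
      invFun := fun s => s.1.1
      left_inv := fun j => rfl
      right_inv := fun s => by
        obtain ⟨⟨a, c⟩, hs⟩ := s
        have : a = c := hs
        subst this
        rfl }
  let e : (Fin n ⊕ T) ≃ (Fin n × Fin n) :=
    (Equiv.sumCongr d (Equiv.refl T)).trans (Equiv.sumCompl P)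
  have he_inl : ∀ a : Fin n, e (Sum.inl a) = (a, a) := fun a => rfl
  have he_inr : ∀ t : T, e (Sum.inr t) = t.1 := fun t => rfl
  let D : Matrix T T ℂ := Matrix.diagonal (fun t => lamF t.1)
  have hblock : Matrix.reindex e.symm e.symm MM = Matrix.fromBlocks A 0 0 D := by
    ext x y
    rw [Matrix.reindex_apply, Equiv.symm_symm, Matrix.submatrix_apply]
    cases x with
    | inl a =>
      cases y with
      | inl j =>
        rw [he_inl, he_inl, hMM]
        show (if ((j,j).2 = (j,j).2) then (if ((a,a):Fin n × Fin n).1 = ((a,a):Fin n × Fin n).2 then A a j else 0) else _) = A a j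
        rw [if_pos rfl, if_pos rfl]
      | inr t =>
        rw [he_inl, he_inr, hMM]
        rw [if_neg t.2, if_neg (fun hh : ((a,a) : Fin n × Fin n) = t.1 => t.2 (by rw [← hh]))]
        rfl
    | inr s =>
      cases y with
      | inl j =>
        rw [he_inr, he_inl, hMM]
        rw [if_pos rfl, if_neg s.2]
        rfl
      | inr t =>
        rw [he_inr, he_inr, hMM]
        rw [if_neg t.2]
        show _ = Matrix.diagonal (fun t : T => lamF t.1) s t
        rw [Matrix.diagonal_apply]
        by_cases hst : s = t
        · rw [if_pos (congrArg Subtype.val hst), if_pos hst, hst]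
        · rw [if_neg (fun hh => hst (Subtype.ext hh)), if_neg hst]
  have hMMcp : MM.charpoly = A.charpoly * D.charpoly := by
    rw [← Matrix.charpoly_reindex e.symm MM, hblock, Matrix.charpoly_fromBlocks_zero₂₁]
  -- charpoly of the diagonal block
  have hD : D.charpoly = ∏ t : T, (Polynomial.X - Polynomial.C (lamF t.1)) := by
    have hcm : Matrix.charmatrix D
        = Matrix.diagonal (fun t : T => (Polynomial.X : Polynomial ℂ) - Polynomial.C (lamF t.1)) := by
      ext s t : 2
      by_cases h : s = t
      · subst h
        rw [Matrix.charmatrix_apply_eq, Matrix.diagonal_apply_eq,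
          show D s s = lamF s.1 from Matrix.diagonal_apply_eq _ s]
      · rw [Matrix.charmatrix_apply_ne _ _ _ h, Matrix.diagonal_apply_ne _ h,
          show D s t = 0 from Matrix.diagonal_apply_ne _ h, map_zero, neg_zero]
    rw [Matrix.charpoly, hcm, Matrix.det_diagonal]
  -- charpoly of A
  have hCcp : C.charpoly = Polynomial.X ^ n - 1 :=
    charpoly_of_shift n C (hCs ▸ shiftM_pow_self n)
      (fun p hdeg hval => shiftM_small_ann n p hdeg (hCs ▸ hval))
  have hAcp : A.charpoly
      = ∏ z ∈ Polynomial.nthRootsFinset n (1:ℂ), (Polynomial.X - Polynomial.C ((1+z)/2)) :=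
    charpoly_A n C A hCcp hA
  -- assemble and prove squarefreeness
  let f : ℂ ⊕ T → ℂ := Sum.elim (fun z => (1+z)/2) (fun t => lamF t.1)
  let s : Finset (ℂ ⊕ T) := (Polynomial.nthRootsFinset n (1:ℂ)).disjSum Finset.univ
  have hprod : LinearMap.charpoly Ψ = ∏ x ∈ s, (Polynomial.X - Polynomial.C (f x)) := by
    rw [hcharpoly, hMMcp, hAcp, hD, Finset.prod_disjSum]
    rfl
  rw [hprod]
  apply Polynomial.Separable.squarefree
  apply Polynomial.separable_prod_X_sub_C_iff'.mpr
  intro x hx y hy hxy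
  cases x with
  | inl z₁ =>
    cases y with
    | inl z₂ =>
      have h1 : (1 + z₁)/2 = (1 + z₂)/2 := hxy
      have h2 : z₁ = z₂ := by
        field_simp at h1
        exact add_left_cancel h1
      rw [h2]
    | inr t =>
      exact absurd hxy (lamF_ne_root hn z₁ (Finset.inl_mem_disjSum.mp hx) t.1)
  | inr t₁ =>
    cases y with
    | inl z₂ =>
      exact absurd hxy.symm (lamF_ne_root hn z₂ (Finset.inl_mem_disjSum.mp hy) t₁.1)
    | inr t₂ =>
      exact congrArg Sum.inr (Subtype.ext (lamF_inj t₁.1 t₂.1 t₁.2 t₂.2 hxy))
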